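/- Let J be a bounded linear operator between Hilbert spaces with J ≠ 0, r a vector, and Δ > 0. The Cauchy point decrease estimate holds: min over t ∈ [0, Δ/‖J^*r‖] of m(−t J^* r) − m(0) ≤ −½ ‖J^* r‖ min{Δ, ‖J^* r‖/‖J^* J‖}, where m(s) = ½‖J s + r‖², provided J^* r ≠ 0. -/

import Mathlib

/-- Cauchy point decrease estimate for the quadratic model `m(s) = ½‖Js + r‖²`
along the steepest-descent direction `-J* r` within a trust region of radius `Δ`. -/
theorem cauchy_point_decrease {H K : Type*}
    [NormedAddCommGroup H] [InnerProductSpace ℝ H] [CompleteSpace H]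
    [NormedAddCommGroup K] [InnerProductSpace ℝ K] [CompleteSpace K]
    (J : H →L[ℝ] K) (hJ : J ≠ 0) (r : K) (Δ : ℝ) (hΔ : 0 < Δ)
    (hJr : (ContinuousLinearMap.adjoint J) r ≠ 0)
    (m : H → ℝ) (hm : ∀ s, m s = (1 / 2) * ‖J s + r‖ ^ 2) :
    ∃ t ∈ Set.Icc (0 : ℝ) (Δ / ‖(ContinuousLinearMap.adjoint J) r‖),
      m (-t • (ContinuousLinearMap.adjoint J) r) - m 0 ≤
        -(1 / 2) * ‖(ContinuousLinearMap.adjoint J) r‖ *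
          min Δ (‖(ContinuousLinearMap.adjoint J) r‖ /
            ‖(ContinuousLinearMap.adjoint J).comp J‖) := by
  set g := (ContinuousLinearMap.adjoint J) r with hg
  have hgnorm : 0 < ‖g‖ := norm_pos_iff.mpr hJr
  -- inner r (J g) = ‖g‖²
  have hinner : inner ℝ r (J g) = (‖g‖ : ℝ) ^ 2 := by
    rw [← ContinuousLinearMap.adjoint_inner_left, ← hg, real_inner_self_eq_norm_sq]
  have hJg : J g ≠ 0 := by
    intro h
    rw [h, inner_zero_right] at hinner
    exact (pow_pos hgnorm 2).ne (by exact hinner)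
  have hb : 0 < ‖J g‖ := norm_pos_iff.mpr hJg
  -- q(t) formula
  have hq : ∀ t : ℝ, m (-t • g) - m 0 =
      (1/2) * t^2 * ‖J g‖^2 - t * ‖g‖^2 := by
    intro t
    have h1 : J (-t • g) + r = r - t • J g := by
      simp [map_smul, neg_smul]; abel
    rw [hm, hm, h1, map_zero, zero_add]
    rw [norm_sub_sq_real, real_inner_smul_right, hinner, norm_smul]
    ring_nf
    simp [mul_pow]
  have hBbound : ‖J g‖^2 ≤ ‖(ContinuousLinearMap.adjoint J).comp J‖ * ‖g‖^2 := by
    have h1 : (‖J g‖ : ℝ)^2 = inner ℝ (((ContinuousLinearMap.adjoint J).comp J) g) g := by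
      rw [ContinuousLinearMap.comp_apply, ContinuousLinearMap.adjoint_inner_left,
        real_inner_self_eq_norm_sq]
    rw [h1]
    calc inner ℝ (((ContinuousLinearMap.adjoint J).comp J) g) g
        ≤ ‖((ContinuousLinearMap.adjoint J).comp J) g‖ * ‖g‖ := real_inner_le_norm _ _
      _ ≤ (‖(ContinuousLinearMap.adjoint J).comp J‖ * ‖g‖) * ‖g‖ := by
          gcongr; exact ContinuousLinearMap.le_opNorm _ _
      _ = ‖(ContinuousLinearMap.adjoint J).comp J‖ * ‖g‖^2 := by ring
  have hB : 0 < ‖(ContinuousLinearMap.adjoint J).comp J‖ := by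
    by_contra h
    push_neg at h
    have : ‖(ContinuousLinearMap.adjoint J).comp J‖ = 0 := le_antisymm h (norm_nonneg _)
    rw [this, zero_mul] at hBbound
    exact absurd hBbound (not_le.mpr (pow_pos hb 2))
  by_cases hcase : ‖J g‖^2 * (Δ / ‖g‖) ≤ ‖g‖^2
  · -- boundary case: t = Δ/‖g‖
    refine ⟨Δ / ‖g‖, ⟨le_of_lt (div_pos hΔ hgnorm), le_refl _⟩, ?_⟩
    rw [hq]
    have ht : 0 < Δ / ‖g‖ := div_pos hΔ hgnorm
    have h1 : (1/2) * (Δ/‖g‖)^2 * ‖J g‖^2 ≤ (1/2) * (Δ/‖g‖) * ‖g‖^2 := by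
      nlinarith [mul_le_mul_of_nonneg_left hcase ht.le]
    have h2 : (1/2) * (Δ/‖g‖) * ‖g‖^2 = (1/2) * Δ * ‖g‖ := by
      field_simp
    have hmin : min Δ (‖g‖ / ‖(ContinuousLinearMap.adjoint J).comp J‖) ≤ Δ := min_le_left _ _
    nlinarith [hgnorm]
  · -- interior case: t = ‖g‖²/‖Jg‖²
    push_neg at hcase
    set t := ‖g‖^2 / ‖J g‖^2 with hts
    have ht0 : 0 < t := div_pos (pow_pos hgnorm 2) (pow_pos hb 2)
    have htle : t ≤ Δ / ‖g‖ := by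
      rw [hts, div_le_div_iff₀ (pow_pos hb 2) hgnorm]
      calc ‖g‖^2 * ‖g‖ ≤ ‖J g‖^2 * (Δ / ‖g‖) * ‖g‖ := by nlinarith
        _ = Δ / ‖g‖ * ‖g‖ * ‖J g‖^2 := by ring
        _ = Δ * ‖J g‖^2 := by rw [div_mul_cancel₀ _ hgnorm.ne']
    refine ⟨t, ⟨ht0.le, htle⟩, ?_⟩
    rw [hq]
    have hqval : (1/2) * t^2 * ‖J g‖^2 - t * ‖g‖^2 = -(1/2) * (‖g‖^4 / ‖J g‖^2) := by
      rw [hts]; field_simp; ring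
    rw [hqval]
    have hmin : min Δ (‖g‖ / ‖(ContinuousLinearMap.adjoint J).comp J‖) ≤
        ‖g‖ / ‖(ContinuousLinearMap.adjoint J).comp J‖ := min_le_right _ _
    have key : ‖g‖ * (‖g‖ / ‖(ContinuousLinearMap.adjoint J).comp J‖) ≤ ‖g‖^4 / ‖J g‖^2 := by
      have heq : ‖g‖ * (‖g‖ / ‖(ContinuousLinearMap.adjoint J).comp J‖)
          = ‖g‖^2 / ‖(ContinuousLinearMap.adjoint J).comp J‖ := by ring
      rw [heq, div_le_div_iff₀ hB (pow_pos hb 2)]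
      calc ‖g‖^2 * ‖J g‖^2 ≤ ‖g‖^2 * (‖(ContinuousLinearMap.adjoint J).comp J‖ * ‖g‖^2) :=
            mul_le_mul_of_nonneg_left hBbound (sq_nonneg _)
        _ = ‖g‖^4 * ‖(ContinuousLinearMap.adjoint J).comp J‖ := by ring
    have h3 : ‖g‖ * min Δ (‖g‖ / ‖(ContinuousLinearMap.adjoint J).comp J‖) ≤
        ‖g‖ * (‖g‖ / ‖(ContinuousLinearMap.adjoint J).comp J‖) :=
      mul_le_mul_of_nonneg_left hmin hgnorm.le
    linarith
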